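/- Fix K ≥ 1, a positive similarity s₀ ∈ ℝ, and negative similarities s₁, …, s_K ∈ ℝ, and define W(τ) = (∑_{j=1}^K exp(s_j/τ)) / (exp(s₀/τ) + ∑_{j=1}^K exp(s_j/τ)) for τ > 0. Then for every τ > 0, the sign of W'(τ) equals the sign of ∑_{r=1}^K (s₀ - s_r)·exp(s_r/τ); in particular W'(τ) > 0 if and only if ∑_{r=1}^K (s₀ - s_r)·exp(s_r/τ) > 0, and W'(τ) < 0 if and only if ∑_{r=1}^K (s₀ - s_r)·exp(s_r/τ) < 0. -/

import Mathlib

/-- For every `τ > 0`, the sign of `W'(τ)` equals the sign of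
`∑ᵣ (s₀ - sᵣ)·exp(sᵣ/τ)`; in particular `W'(τ) > 0` iff that sum is positive,
and `W'(τ) < 0` iff it is negative. -/
theorem gradient_scaling_factor_deriv_sign
    (K : ℕ) (hK : 1 ≤ K) (s₀ : ℝ) (s : Fin K → ℝ) (τ : ℝ) (hτ : 0 < τ) :
    Real.sign
        (deriv
          (fun τ : ℝ =>
            (∑ j, Real.exp (s j / τ)) /
              (Real.exp (s₀ / τ) + ∑ j, Real.exp (s j / τ))) τ)
      = Real.sign (∑ r, (s₀ - s r) * Real.exp (s r / τ)) ∧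
    (0 < deriv
        (fun τ : ℝ =>
          (∑ j, Real.exp (s j / τ)) /
            (Real.exp (s₀ / τ) + ∑ j, Real.exp (s j / τ))) τ
      ↔ 0 < ∑ r, (s₀ - s r) * Real.exp (s r / τ)) ∧
    (deriv
        (fun τ : ℝ =>
          (∑ j, Real.exp (s j / τ)) /
            (Real.exp (s₀ / τ) + ∑ j, Real.exp (s j / τ))) τ < 0
      ↔ ∑ r, (s₀ - s r) * Real.exp (s r / τ) < 0) := by
  set E : ℝ := Real.exp (s₀ / τ) with hE
  set S : ℝ := ∑ j, Real.exp (s j / τ) with hSdef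
  set SG : ℝ := ∑ r, (s₀ - s r) * Real.exp (s r / τ) with hSGdef
  have hbase : ∀ a : ℝ, HasDerivAt (fun x : ℝ => Real.exp (a / x))
      (Real.exp (a / τ) * (a * -(τ ^ 2)⁻¹)) τ := by
    intro a
    have h1 : HasDerivAt (fun x : ℝ => a / x) (a * -(τ ^ 2)⁻¹) τ := by
      simpa [div_eq_mul_inv] using (hasDerivAt_inv hτ.ne').const_mul a
    exact h1.exp
  have hS : HasDerivAt (fun x : ℝ => ∑ j, Real.exp (s j / x))
      (∑ j, Real.exp (s j / τ) * (s j * -(τ ^ 2)⁻¹)) τ :=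
    HasDerivAt.fun_sum fun j _ => hbase (s j)
  have hEpos : 0 < E := Real.exp_pos _
  have hSnonneg : 0 ≤ S := Finset.sum_nonneg fun j _ => (Real.exp_pos _).le
  have hden : 0 < E + S := by linarith
  have hW : HasDerivAt
      (fun x : ℝ => (∑ j, Real.exp (s j / x)) /
        (Real.exp (s₀ / x) + ∑ j, Real.exp (s j / x)))
      (((∑ j, Real.exp (s j / τ) * (s j * -(τ ^ 2)⁻¹)) * (E + S) -
        S * (Real.exp (s₀ / τ) * (s₀ * -(τ ^ 2)⁻¹) +
          ∑ j, Real.exp (s j / τ) * (s j * -(τ ^ 2)⁻¹))) / (E + S) ^ 2) τ :=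
    hS.div ((hbase s₀).add hS) hden.ne'
  set c : ℝ := (τ ^ 2)⁻¹ * E / (E + S) ^ 2 with hc
  have hcpos : 0 < c := by
    apply div_pos
    · exact mul_pos (inv_pos.mpr (by positivity)) hEpos
    · positivity
  have hkey : deriv
      (fun x : ℝ => (∑ j, Real.exp (s j / x)) /
        (Real.exp (s₀ / x) + ∑ j, Real.exp (s j / x))) τ = c * SG := by
    rw [hW.deriv]
    have hA : (∑ j, Real.exp (s j / τ) * (s j * -(τ ^ 2)⁻¹))
        = -(τ ^ 2)⁻¹ * ∑ j, s j * Real.exp (s j / τ) := by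
      rw [Finset.mul_sum]; exact Finset.sum_congr rfl fun j _ => by ring
    have hSG : SG = s₀ * S - ∑ j, s j * Real.exp (s j / τ) := by
      rw [hSGdef, hSdef, Finset.mul_sum, ← Finset.sum_sub_distrib]
      exact Finset.sum_congr rfl fun j _ => by ring
    rw [hA, hSG, hc]
    have h2 : ((E + S) ^ 2) ≠ 0 := by positivity
    field_simp
    ring
  refine ⟨?_, ?_, ?_⟩
  · rw [hkey]
    rcases lt_trichotomy SG 0 with h | h | h
    · rw [Real.sign_of_neg h, Real.sign_of_neg (by nlinarith)]
    · rw [h, mul_zero]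
    · rw [Real.sign_of_pos h, Real.sign_of_pos (by nlinarith)]
  · rw [hkey]
    constructor
    · intro h; nlinarith
    · intro h; positivity
  · rw [hkey]
    constructor
    · intro h; nlinarith
    · intro h; nlinarith
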